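/- Let A = ⟨Q, Σ⟩ be a DFA such that the graph Γ₂(A) is strongly connected. Then A is completely reachable; more precisely, for every non-empty subset P ⊆ Q there is a word w that is a product of words of defect at most 2 (possibly the empty product) such that P = Q·w. -/

import Mathlib

/-!
Framework: complete deterministic finite automata, reachability of subsets,
defect/excluded/duplicate states of words, and the layered graphs
`Γ₁(A), Γ₂(A), …` of Bondar & Volkov, "A Characterization of Completely
Reachable Automata".
-/

/-- The action of a word on a state: `q · w`. -/
def actWord {Q σ : Type*} (δ : Q → σ → Q) (w : List σ) (q : Q) : Q :=
  w.foldl δ q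

/-- The image of a set of states under a word: `P · w`. -/
def actSet {Q σ : Type*} (δ : Q → σ → Q) (w : List σ) (P : Set Q) : Set Q :=
  actWord δ w '' P

/-- The set `excl(w) = Q \ Q·w` of excluded states of the word `w`. -/
def excl {Q σ : Type*} (δ : Q → σ → Q) (w : List σ) : Set Q :=
  Set.univ \ actSet δ w Set.univ

/-- The defect of the word `w`, i.e. `|Q \ Q·w|`. -/
noncomputable def defect {Q σ : Type*} (δ : Q → σ → Q) (w : List σ) : ℕ :=
  (excl δ w).ncard

/-- The set `dupl(w)` of duplicate states of the word `w`. -/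
def dupl {Q σ : Type*} (δ : Q → σ → Q) (w : List σ) : Set Q :=
  {p | ∃ q₁ q₂ : Q, q₁ ≠ q₂ ∧ actWord δ w q₁ = p ∧ actWord δ w q₂ = p}

/-- A subset `P ⊆ Q` is reachable if `P = Q·w` for some word `w`. -/
def reachableSubset {Q σ : Type*} (δ : Q → σ → Q) (P : Set Q) : Prop :=
  ∃ w : List σ, actSet δ w Set.univ = P

/-- A DFA is completely reachable if every nonempty subset of states is reachable. -/
def completelyReachable {Q σ : Type*} (δ : Q → σ → Q) : Prop :=
  ∀ P : Set Q, P.Nonempty → reachableSubset δ P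

/-- A directed graph given by a vertex set and an edge relation. -/
structure DGraph (V : Type*) where
  verts : Set V
  edge : V → V → Prop

/-- Reachability by a directed path in a graph. -/
def GReach {V : Type*} (G : DGraph V) : V → V → Prop :=
  Relation.ReflTransGen G.edge

/-- A graph is strongly connected if each of its vertices is reachable from
any other one. -/
def StronglyConnected {V : Type*} (G : DGraph V) : Prop :=
  ∀ u ∈ G.verts, ∀ v ∈ G.verts, GReach G u v

/-- The strongly connected component of the vertex `v`: all vertices mutually
reachable with `v`. -/
def scc {V : Type*} (G : DGraph V) (v : V) : Set V :=
  {u | u ∈ G.verts ∧ GReach G u v ∧ GReach G v u}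

/-- Vertices of the layered graphs: states (`Sum.inl`) and subsets of states
(`Sum.inr`). -/
abbrev Vtx (Q : Type*) := Q ⊕ Set Q

/-- The support of a set of vertices: the states belonging to it. -/
def support {Q : Type*} (S : Set (Vtx Q)) : Set Q :=
  {q | Sum.inl q ∈ S}

/-- The graph `Γ₁(A)`: vertices are the states, and there is an edge
`(excl w, dupl w)` for each word `w` of defect 1. -/
def Gamma1 {Q σ : Type*} (δ : Q → σ → Q) : DGraph (Vtx Q) where
  verts := Set.range Sum.inl
  edge := fun u v => ∃ q p : Q, u = Sum.inl q ∧ v = Sum.inl p ∧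
    ∃ w : List σ, defect δ w = 1 ∧ excl δ w = {q} ∧ p ∈ dupl δ w

/-- `Qnext G k`: the collection of the supports of all SCCs of `G` of rank
at least `k` (this is the set `Q_k` when `G = Γ_{k-1}(A)`). -/
def Qnext {Q : Type*} (G : DGraph (Vtx Q)) (k : ℕ) : Set (Set Q) :=
  {C | ∃ v ∈ G.verts, C = support (scc G v) ∧ k ≤ C.ncard}

/-- One step of the iterative construction: from `G = Γ_{k-1}(A)` build
`Γ_k(A)` by adding the new vertices `Q_k`, the inclusion edges `I_k`, and the
edges `E_k` enforced by words of defect `k`. -/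
def step {Q σ : Type*} (δ : Q → σ → Q) (G : DGraph (Vtx Q)) (k : ℕ) :
    DGraph (Vtx Q) where
  verts := G.verts ∪ Sum.inr '' Qnext G k
  edge := fun u v =>
    G.edge u v ∨
    (∃ C ∈ Qnext G k, v = Sum.inr C ∧
      ((∃ q : Q, u = Sum.inl q ∧ q ∈ C) ∨
       (∃ D : Set Q, u = Sum.inr D ∧ Sum.inr D ∈ G.verts ∧ D ⊂ C))) ∨
    (∃ C ∈ Qnext G k, ∃ p : Q, u = Sum.inr C ∧ v = Sum.inl p ∧
      ∃ w : List σ, defect δ w = k ∧ excl δ w ⊆ C ∧ p ∈ dupl δ w)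

/-- The layered graphs `Γ_k(A)` (with `Γ_0 := Γ_1`). -/
def Gamma {Q σ : Type*} (δ : Q → σ → Q) : ℕ → DGraph (Vtx Q)
  | 0 => Gamma1 δ
  | 1 => Gamma1 δ
  | (k + 2) => step δ (Gamma δ (k + 1)) (k + 2)

/-- The FAILURE condition at step `k`: every SCC of `Γ_k(A)` has rank at
most `k`. -/
def failsAt {Q σ : Type*} (δ : Q → σ → Q) (k : ℕ) : Prop :=
  ∀ v ∈ (Gamma δ k).verts, (support (scc (Gamma δ k) v)).ncard ≤ k

/-- The iterative construction stops at step `k` (so `Γ(A) = Γ_k(A)`):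
`k` is the first index at which `Γ_k(A)` is strongly connected (SUCCESS) or
every SCC of `Γ_k(A)` has rank at most `k` (FAILURE). -/
def stopsAt {Q σ : Type*} (δ : Q → σ → Q) (k : ℕ) : Prop :=
  1 ≤ k ∧ (StronglyConnected (Gamma δ k) ∨ failsAt δ k) ∧
    ∀ j, 1 ≤ j → j < k → ¬ StronglyConnected (Gamma δ j) ∧ ¬ failsAt δ j

section Aux

variable {Q σ : Type*}

lemma actWord_append (δ : Q → σ → Q) (u v : List σ) (q : Q) :
    actWord δ (u ++ v) q = actWord δ v (actWord δ u q) :=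
  List.foldl_append ..

lemma actSet_append (δ : Q → σ → Q) (u v : List σ) (P : Set Q) :
    actSet δ (u ++ v) P = actSet δ v (actSet δ u P) := by
  unfold actSet
  rw [← Set.image_comp]
  exact Set.image_congr' (fun q => actWord_append δ u v q)

/-- If there is a path from inside `S` to outside `S`, some edge crosses. -/
lemma crossing {V : Type*} (G : DGraph V) (S : Set V) {v : V} (hv : v ∉ S) :
    ∀ u, GReach G u v → u ∈ S → ∃ a ∈ S, ∃ b ∉ S, G.edge a b := by
  intro u hr
  induction hr using Relation.ReflTransGen.head_induction_on with
  | refl => intro hu; exact absurd hu hv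
  | @head a c hab hbv ih =>
    intro hu
    by_cases hb : c ∈ S
    · exact ih hb
    · exact ⟨a, hu, c, hb, hab⟩

/-- A mixed SCC of `Γ₁` yields a defect-1 word excluded outside `P` and
duplicating inside `P`. -/
lemma mixed_scc (δ : Q → σ → Q) (P : Set Q)
    (C : Set Q) (hC : C ∈ Qnext (Gamma1 δ) 2)
    (hq : ∃ q ∈ C, q ∉ P) (hp : ∃ p ∈ C, p ∈ P) :
    ∃ w : List σ, defect δ w ≤ 2 ∧ excl δ w ⊆ Pᶜ ∧ (dupl δ w ∩ P).Nonempty := by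
  obtain ⟨v, hv, hCv, _⟩ := hC
  obtain ⟨q, hqC, hqP⟩ := hq
  obtain ⟨p, hpC, hpP⟩ := hp
  rw [hCv] at hqC hpC
  obtain ⟨_, hq1, _⟩ := hqC
  obtain ⟨_, _, hp2⟩ := hpC
  have hreach : GReach (Gamma1 δ) (Sum.inl q) (Sum.inl p) := hq1.trans hp2
  have hSp : (Sum.inl p : Vtx Q) ∉ {x : Vtx Q | ∀ r, x = Sum.inl r → r ∉ P} := by
    intro hmem
    exact hmem p rfl hpP
  have hSq : (Sum.inl q : Vtx Q) ∈ {x : Vtx Q | ∀ r, x = Sum.inl r → r ∉ P} := by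
    intro r hr
    rw [Sum.inl.injEq] at hr
    rwa [← hr]
  obtain ⟨a, ha, b, hb, hedge⟩ :=
    crossing (Gamma1 δ) _ hSp (Sum.inl q) hreach hSq
  obtain ⟨q₀, p₀, rfl, rfl, w, hw1, hwx, hwd⟩ := hedge
  have hq₀ : q₀ ∉ P := ha q₀ rfl
  have hp₀ : p₀ ∈ P := by
    by_contra hcon
    exact hb (fun r hr => by rw [Sum.inl.injEq] at hr; rwa [← hr])
  exact ⟨w, by omega, by rw [hwx]; simpa using hq₀, ⟨p₀, hwd, hp₀⟩⟩

/-- Key lemma: if `Γ₂` is strongly connected, then for each nonempty proper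
`P` there is a word of defect at most 2 excluded outside `P` and duplicating
inside `P`. -/
lemma key (δ : Q → σ → Q) (h : StronglyConnected (Gamma δ 2))
    (P : Set Q) (hne : P.Nonempty) (hproper : P ≠ Set.univ) :
    ∃ w : List σ, defect δ w ≤ 2 ∧ excl δ w ⊆ Pᶜ ∧ (dupl δ w ∩ P).Nonempty := by
  by_cases hmix : ∃ C ∈ Qnext (Gamma1 δ) 2, (∃ q ∈ C, q ∉ P) ∧ (∃ p ∈ C, p ∈ P)
  · obtain ⟨C, hC, h1, h2⟩ := hmix
    exact mixed_scc δ P C hC h1 h2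
  obtain ⟨q, hq⟩ := Set.ne_univ_iff_exists_notMem P |>.mp hproper
  obtain ⟨p, hp⟩ := hne
  have hG2 : Gamma δ 2 = step δ (Gamma1 δ) 2 := rfl
  have hvq : (Sum.inl q : Vtx Q) ∈ (Gamma δ 2).verts := by
    rw [hG2]; exact Or.inl ⟨q, rfl⟩
  have hvp : (Sum.inl p : Vtx Q) ∈ (Gamma δ 2).verts := by
    rw [hG2]; exact Or.inl ⟨p, rfl⟩
  have hreach : GReach (Gamma δ 2) (Sum.inl q) (Sum.inl p) := h _ hvq _ hvp
  set S : Set (Vtx Q) :=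
    {x | (∃ r, x = Sum.inl r ∧ r ∉ P) ∨ (∃ C, x = Sum.inr C ∧ ∀ c ∈ C, c ∉ P)}
    with hS
  have hSp : (Sum.inl p : Vtx Q) ∉ S := by
    rintro (⟨r, hr, hrP⟩ | ⟨C, hC, -⟩)
    · rw [Sum.inl.injEq] at hr; exact hrP (hr ▸ hp)
    · exact Sum.inl_ne_inr hC
  have hSq : (Sum.inl q : Vtx Q) ∈ S := Or.inl ⟨q, rfl, hq⟩
  obtain ⟨a, ha, b, hb, hedge⟩ := crossing (Gamma δ 2) S hSp (Sum.inl q) hreach hSq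
  rw [hG2] at hedge
  rcases hedge with h1 | ⟨C, hCQ, hbC, hor⟩ | ⟨C, hCQ, p₀, haC, hbp, w, hw2, hsub, hdup⟩
  · -- a Γ₁-edge crossing
    obtain ⟨q₀, p₀, rfl, rfl, w, hw1, hwx, hwd⟩ := h1
    have hq₀ : q₀ ∉ P := by
      rcases ha with ⟨r, hr, hrP⟩ | ⟨C, hC, -⟩
      · rw [Sum.inl.injEq] at hr; rwa [hr]
      · exact absurd hC Sum.inl_ne_inr
    have hp₀ : p₀ ∈ P := by
      by_contra hcon
      exact hb (Or.inl ⟨p₀, rfl, hcon⟩)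
    exact ⟨w, by omega, by rw [hwx]; simpa using hq₀, ⟨p₀, hwd, hp₀⟩⟩
  · -- an edge into a subset-vertex cannot cross
    exfalso
    rcases hor with ⟨q₀, rfl, hq₀C⟩ | ⟨D, rfl, hD, -⟩
    · have hq₀ : q₀ ∉ P := by
        rcases ha with ⟨r, hr, hrP⟩ | ⟨C', hC', -⟩
        · rw [Sum.inl.injEq] at hr; rwa [hr]
        · exact absurd hC' Sum.inl_ne_inr
      have hall : ∀ c ∈ C, c ∉ P := fun c hc hcP =>
        hmix ⟨C, hCQ, ⟨q₀, hq₀C, hq₀⟩, ⟨c, hc, hcP⟩⟩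
      exact hb (hbC ▸ Or.inr ⟨C, rfl, hall⟩)
    · obtain ⟨x, hx⟩ := hD
      exact Sum.inl_ne_inr hx
  · -- a defect-2 edge crossing
    have hCsub : ∀ c ∈ C, c ∉ P := by
      rcases ha with ⟨r, hr, -⟩ | ⟨C', hC', hall⟩
      · rw [haC] at hr
        exact absurd hr.symm Sum.inl_ne_inr
      · rw [haC, Sum.inr.injEq] at hC'
        rwa [hC']
    have hp₀ : p₀ ∈ P := by
      by_contra hcon
      exact hb (hbp ▸ Or.inl ⟨p₀, rfl, hcon⟩)
    refine ⟨w, by omega, ?_, ⟨p₀, hdup, hp₀⟩⟩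
    intro x hx
    exact hCsub x (hsub hx)

/-- One refinement step: enlarge a reachable target using one word of small
defect. -/
lemma main_aux [Fintype Q] (δ : Q → σ → Q)
    (h : StronglyConnected (Gamma δ 2)) :
    ∀ n (P : Set Q), P.Nonempty → Pᶜ.ncard ≤ n →
      ∃ ws : List (List σ), (∀ u ∈ ws, defect δ u ≤ 2) ∧
        actSet δ ws.flatten Set.univ = P := by
  intro n
  induction n with
  | zero =>
    intro P hne hcard
    have hthis : Pᶜ = ∅ := (Set.ncard_eq_zero (Set.toFinite _)).mp (Nat.le_zero.mp hcard)
    have hPu : P = Set.univ := by rwa [Set.compl_empty_iff] at hthis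
    exact ⟨[], by simp, by simp [hPu, actSet, actWord]; exact Set.eq_univ_of_forall fun q => ⟨q, rfl⟩⟩
  | succ n ih =>
    intro P hne hcard
    by_cases hle : Pᶜ.ncard ≤ n
    · exact ih P hne hle
    have hproper : P ≠ Set.univ := by
      intro hu
      rw [hu, Set.compl_univ, Set.ncard_empty] at hle
      omega
    obtain ⟨w, hw2, hwx, hwd⟩ := key δ h P hne hproper
    set f := actWord δ w with hf
    set P' := f ⁻¹' P with hP'
    have hPr : P ⊆ Set.range f := by
      intro x hx
      have hnx : x ∉ excl δ w := fun hc => hwx hc hx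
      simp only [excl, actSet, Set.image_univ, Set.mem_diff, Set.mem_univ,
        true_and, not_not] at hnx
      exact hnx
    have himg : f '' P' = P := by
      rw [hP', Set.image_preimage_eq_inter_range,
        Set.inter_eq_self_of_subset_left hPr]
    obtain ⟨d, hdd, hdP⟩ := hwd
    obtain ⟨q₁, q₂, hq12, hfq₁, hfq₂⟩ := hdd
    have hq₁P' : q₁ ∈ P' := by rw [hP']; simp only [Set.mem_preimage]; rw [← hf] at hfq₁; rw [hfq₁]; exact hdP
    have hq₂P' : q₂ ∈ P' := by rw [hP']; simp only [Set.mem_preimage]; rw [← hf] at hfq₂; rw [hfq₂]; exact hdP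
    have himg2 : f '' (P' \ {q₁}) = P := by
      apply subset_antisymm
      · intro x hx
        obtain ⟨y, hy, rfl⟩ := hx
        exact himg ▸ ⟨y, hy.1, rfl⟩
      · intro x hx
        rw [← himg] at hx
        obtain ⟨y, hyP', hyx⟩ := hx
        by_cases hy1 : y = q₁
        · refine ⟨q₂, ⟨hq₂P', ?_⟩, ?_⟩
          · simp only [Set.mem_singleton_iff]
            exact fun hc => hq12 hc.symm
          · rw [← hf] at hfq₂ hfq₁
            rw [hfq₂, ← hfq₁, ← hy1, hyx]
        · exact ⟨y, ⟨hyP', hy1⟩, hyx⟩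
    have hcard1 : P.ncard < P'.ncard := by
      calc P.ncard = (f '' (P' \ {q₁})).ncard := by rw [himg2]
        _ ≤ (P' \ {q₁}).ncard := Set.ncard_image_le (Set.toFinite _)
        _ < P'.ncard := Set.ncard_diff_singleton_lt_of_mem hq₁P' (Set.toFinite _)
    have hsum1 := Set.ncard_add_ncard_compl P
    have hsum2 := Set.ncard_add_ncard_compl P'
    have hcard' : P'ᶜ.ncard ≤ n := by omega
    have hne' : P'.Nonempty := by
      obtain ⟨x, hx⟩ := hne
      obtain ⟨y, hy, -⟩ := himg ▸ hx
      exact ⟨y, hy⟩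
    obtain ⟨ws', hws'2, hws'act⟩ := ih P' hne' hcard'
    refine ⟨ws' ++ [w], ?_, ?_⟩
    · intro u hu
      rcases List.mem_append.mp hu with h' | h'
      · exact hws'2 u h'
      · rw [List.mem_singleton] at h'
        exact h' ▸ hw2
    · rw [List.flatten_append, actSet_append, hws'act]
      simpa [actSet, List.flatten] using himg

end Aux

/-- Theorem 2: if `Γ₂(A)` is strongly connected, then `A` is
completely reachable; more precisely, every non-empty subset `P ⊆ Q` satisfies
`P = Q·w` for some product `w` of words of defect at most 2. -/
theorem gamma2_strongly_connected_completely_reachable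
    {Q σ : Type*} [Fintype Q] (δ : Q → σ → Q)
    (h : StronglyConnected (Gamma δ 2)) :
    completelyReachable δ ∧
      ∀ P : Set Q, P.Nonempty →
        ∃ ws : List (List σ), (∀ u ∈ ws, defect δ u ≤ 2) ∧
          actSet δ ws.flatten Set.univ = P := by
  have main : ∀ P : Set Q, P.Nonempty →
      ∃ ws : List (List σ), (∀ u ∈ ws, defect δ u ≤ 2) ∧
        actSet δ ws.flatten Set.univ = P := by
    intro P hne
    exact main_aux δ h Pᶜ.ncard P hne le_rfl
  refine ⟨?_, main⟩
  intro P hne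
  obtain ⟨ws, -, hws⟩ := main P hne
  exact ⟨ws.flatten, hws⟩
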